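/- (Theorem 1, conclusion 2, EPS law) Fix d ≥ 1, T > 0, μ : Fin d → ℝ, σx ≥ 0, ε : Fin d → ℝ, and measurable schedules γ, σ : ℝ → ℝ with v t := (γ t)²σx² + (σ t)² > 0 for t ∈ [0,T], and with t ↦ γ t / v t, t ↦ σ t / v t and t ↦ 1 / v t integrable on [0,T]. Let Y₀ and Z be independent with laws Measure.pi (fun i => gaussianReal (μ i) (σx²)) and Measure.pi (fun i => gaussianReal 0 1). Define the adversarial EPS Ŝ = (1/T)·∫₀^T (fun i => −(γ t * Y₀ i + σ t * Z i + ε i − γ t * μ i)/(v t)) dt. Then the law of Ŝ is Measure.pi (fun i => gaussianReal (−c · ε i) (a²σx² + b²)), where a = (1/T)∫₀^T γ t / (v t) dt, b = (1/T)∫₀^T σ t / (v t) dt, and c = (1/T)∫₀^T 1/(v t) dt; in particular the EPS of the adversarial sample is Gaussian with mean −μ_S where μ_S = E_{t∼U(0,T)}[ε/(γ_t²σx² + σ_t²)] = c•ε. -/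

import Mathlib

open MeasureTheory ProbabilityTheory

open Real
open scoped ENNReal NNReal

-- exponent completing-the-square identity
lemma exp_square_identity {s₁ s₂ : ℝ} (h₁ : 0 < s₁) (h₂ : 0 < s₂) (m₁ m₂ z x : ℝ) :
    -(x - m₁) ^ 2 / (2 * s₁) + -(z - x - m₂) ^ 2 / (2 * s₂)
      = -((s₁ + s₂) / (2 * s₁ * s₂)) * (x - (m₁ * s₂ + (z - m₂) * s₁) / (s₁ + s₂)) ^ 2
        + -(z - (m₁ + m₂)) ^ 2 / (2 * (s₁ + s₂)) := by
  have hs : s₁ + s₂ ≠ 0 := by positivity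
  field_simp
  ring

-- real convolution of gaussian pdfs
lemma gaussianPDFReal_conv {v₁ v₂ : ℝ≥0} (h₁ : v₁ ≠ 0) (h₂ : v₂ ≠ 0) (m₁ m₂ z : ℝ) :
    ∫ x : ℝ, gaussianPDFReal m₁ v₁ x * gaussianPDFReal m₂ v₂ (z - x)
      = gaussianPDFReal (m₁ + m₂) (v₁ + v₂) z := by
  have hs₁ : (0:ℝ) < v₁ := lt_of_le_of_ne (v₁.coe_nonneg) (by exact_mod_cast (Ne.symm h₁))
  have hs₂ : (0:ℝ) < v₂ := lt_of_le_of_ne (v₂.coe_nonneg) (by exact_mod_cast (Ne.symm h₂))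
  set s₁ : ℝ := (v₁ : ℝ)
  set s₂ : ℝ := (v₂ : ℝ)
  set A : ℝ := (s₁ + s₂) / (2 * s₁ * s₂) with hA
  set x₀ : ℝ := (m₁ * s₂ + (z - m₂) * s₁) / (s₁ + s₂) with hx₀
  have hApos : 0 < A := by positivity
  have hptwise : ∀ x : ℝ, gaussianPDFReal m₁ v₁ x * gaussianPDFReal m₂ v₂ (z - x)
      = ((√(2 * π * s₁))⁻¹ * (√(2 * π * s₂))⁻¹ * rexp (-(z - (m₁ + m₂)) ^ 2 / (2 * (s₁ + s₂))))
        * rexp (-A * (x - x₀) ^ 2) := by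
    intro x
    rw [gaussianPDFReal, gaussianPDFReal]
    rw [show (√(2 * π * ↑v₁))⁻¹ * rexp (-(x - m₁) ^ 2 / (2 * ↑v₁)) *
        ((√(2 * π * ↑v₂))⁻¹ * rexp (-(z - x - m₂) ^ 2 / (2 * ↑v₂)))
        = (√(2 * π * s₁))⁻¹ * (√(2 * π * s₂))⁻¹ *
          (rexp (-(x - m₁) ^ 2 / (2 * s₁)) * rexp (-(z - x - m₂) ^ 2 / (2 * s₂))) by ring]
    rw [← Real.exp_add, exp_square_identity hs₁ hs₂ m₁ m₂ z x, Real.exp_add]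
    ring
  calc ∫ x : ℝ, gaussianPDFReal m₁ v₁ x * gaussianPDFReal m₂ v₂ (z - x)
      = ∫ x : ℝ, ((√(2 * π * s₁))⁻¹ * (√(2 * π * s₂))⁻¹
          * rexp (-(z - (m₁ + m₂)) ^ 2 / (2 * (s₁ + s₂)))) * rexp (-A * (x - x₀) ^ 2) := by
        exact integral_congr_ae (Filter.Eventually.of_forall hptwise)
    _ = ((√(2 * π * s₁))⁻¹ * (√(2 * π * s₂))⁻¹
          * rexp (-(z - (m₁ + m₂)) ^ 2 / (2 * (s₁ + s₂)))) * ∫ x : ℝ, rexp (-A * (x - x₀) ^ 2) := by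
        exact integral_const_mul _ _
    _ = ((√(2 * π * s₁))⁻¹ * (√(2 * π * s₂))⁻¹
          * rexp (-(z - (m₁ + m₂)) ^ 2 / (2 * (s₁ + s₂)))) * √(π / A) := by
        rw [show (fun x : ℝ => rexp (-A * (x - x₀) ^ 2)) = fun x => (fun y => rexp (-A * y ^ 2)) (x - x₀) from rfl,
          integral_sub_right_eq_self (fun y => rexp (-A * y ^ 2)) x₀, integral_gaussian]
    _ = gaussianPDFReal (m₁ + m₂) (v₁ + v₂) z := by
        rw [gaussianPDFReal]
        push_cast
        have hconst : (√(2 * π * s₁))⁻¹ * (√(2 * π * s₂))⁻¹ * √(π / A)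
            = (√(2 * π * (s₁ + s₂)))⁻¹ := by
          have e1 : π / A = (2 * π * s₁) * (2 * π * s₂) / (2 * π * (s₁ + s₂)) := by
            rw [hA]; field_simp
          have h2πs₁ : (0:ℝ) < 2 * π * s₁ := by positivity
          have h2πs₂ : (0:ℝ) < 2 * π * s₂ := by positivity
          have h2πs : (0:ℝ) < 2 * π * (s₁ + s₂) := by positivity
          rw [e1, Real.sqrt_div (by positivity), Real.sqrt_mul (le_of_lt h2πs₁)]
          have hn₁ : √(2 * π * s₁) ≠ 0 := by positivity
          have hn₂ : √(2 * π * s₂) ≠ 0 := by positivity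
          have hn : √(2 * π * (s₁ + s₂)) ≠ 0 := by positivity
          field_simp
        rw [show ((√(2 * π * s₁))⁻¹ * (√(2 * π * s₂))⁻¹
              * rexp (-(z - (m₁ + m₂)) ^ 2 / (2 * (s₁ + s₂)))) * √(π / A)
            = ((√(2 * π * s₁))⁻¹ * (√(2 * π * s₂))⁻¹ * √(π / A))
              * rexp (-(z - (m₁ + m₂)) ^ 2 / (2 * (s₁ + s₂))) by ring, hconst]


lemma gaussianPDFReal_le (m : ℝ) (v : ℝ≥0) (x : ℝ) :
    gaussianPDFReal m v x ≤ (√(2 * π * v))⁻¹ := by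
  rw [gaussianPDFReal]
  have h1 : rexp (-(x - m) ^ 2 / (2 * v)) ≤ 1 := by
    rw [Real.exp_le_one_iff]
    apply div_nonpos_of_nonpos_of_nonneg
    · simpa using sq_nonneg (x - m)
    · positivity
  have h2 : (0:ℝ) ≤ (√(2 * π * v))⁻¹ := by positivity
  calc (√(2 * π * ↑v))⁻¹ * rexp (-(x - m) ^ 2 / (2 * ↑v)) ≤ (√(2 * π * ↑v))⁻¹ * 1 :=
        mul_le_mul_of_nonneg_left h1 h2
    _ = (√(2 * π * ↑v))⁻¹ := mul_one _

lemma integrable_gaussian_mul (m₁ m₂ z : ℝ) (v₁ v₂ : ℝ≥0) :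
    Integrable (fun x : ℝ => gaussianPDFReal m₁ v₁ x * gaussianPDFReal m₂ v₂ (z - x)) := by
  refine Integrable.mono' ((integrable_gaussianPDFReal m₁ v₁).const_mul ((√(2 * π * v₂))⁻¹))
    ?_ (Filter.Eventually.of_forall fun x => ?_)
  · exact ((measurable_gaussianPDFReal m₁ v₁).mul
      ((measurable_gaussianPDFReal m₂ v₂).comp (measurable_const.sub measurable_id))).aestronglyMeasurable
  · rw [Real.norm_eq_abs, abs_of_nonneg (mul_nonneg (gaussianPDFReal_nonneg _ _ _)
      (gaussianPDFReal_nonneg _ _ _)), mul_comm ((√(2 * π * ↑v₂))⁻¹)]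
    exact mul_le_mul_of_nonneg_left (gaussianPDFReal_le _ _ _) (gaussianPDFReal_nonneg _ _ _)

lemma gaussianPDF_lintegral_conv {v₁ v₂ : ℝ≥0} (h₁ : v₁ ≠ 0) (h₂ : v₂ ≠ 0) (m₁ m₂ z : ℝ) :
    ∫⁻ x : ℝ, gaussianPDF m₁ v₁ x * gaussianPDF (m₂ + x) v₂ z
      = gaussianPDF (m₁ + m₂) (v₁ + v₂) z := by
  have key : ∀ x : ℝ, gaussianPDF m₁ v₁ x * gaussianPDF (m₂ + x) v₂ z
      = ENNReal.ofReal (gaussianPDFReal m₁ v₁ x * gaussianPDFReal m₂ v₂ (z - x)) := by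
    intro x
    rw [gaussianPDF, gaussianPDF, ← ENNReal.ofReal_mul (gaussianPDFReal_nonneg _ _ _),
      gaussianPDFReal_sub]
  simp_rw [key]
  rw [← ofReal_integral_eq_lintegral_ofReal (integrable_gaussian_mul m₁ m₂ z v₁ v₂)
    (Filter.Eventually.of_forall fun x => mul_nonneg (gaussianPDFReal_nonneg _ _ _)
      (gaussianPDFReal_nonneg _ _ _)),
    gaussianPDFReal_conv h₁ h₂ m₁ m₂ z, gaussianPDF]

lemma gaussianReal_conv (m₁ m₂ : ℝ) (v₁ v₂ : ℝ≥0) :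
    Measure.map (fun p : ℝ × ℝ => p.1 + p.2)
        ((gaussianReal m₁ v₁).prod (gaussianReal m₂ v₂))
      = gaussianReal (m₁ + m₂) (v₁ + v₂) := by
  by_cases h₁ : v₁ = 0
  · subst h₁
    rw [gaussianReal_zero_var, Measure.dirac_prod,
      Measure.map_map measurable_add measurable_prodMk_left]
    have : (fun p : ℝ × ℝ => p.1 + p.2) ∘ Prod.mk m₁ = fun y => m₁ + y := rfl
    rw [this, gaussianReal_map_const_add, add_comm m₂ m₁, zero_add]
  by_cases h₂ : v₂ = 0
  · subst h₂
    rw [gaussianReal_zero_var, Measure.prod_dirac,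
      Measure.map_map measurable_add measurable_prodMk_right]
    have : (fun p : ℝ × ℝ => p.1 + p.2) ∘ (fun x : ℝ => (x, m₂)) = fun x => x + m₂ := rfl
    rw [this, gaussianReal_map_add_const, add_zero]
  -- both variances nonzero
  have hmeas2 : Measurable (fun q : ℝ × ℝ => gaussianPDF (m₂ + q.1) v₂ q.2) := by
    apply Measurable.ennreal_ofReal
    unfold gaussianPDFReal
    fun_prop
  ext s hs
  rw [Measure.map_apply measurable_add hs, Measure.prod_apply (measurable_add hs)]
  have hslice : ∀ x : ℝ, (gaussianReal m₂ v₂) (Prod.mk x ⁻¹' ((fun p : ℝ × ℝ => p.1 + p.2) ⁻¹' s))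
      = ∫⁻ z in s, gaussianPDF (m₂ + x) v₂ z := by
    intro x
    have hpre : (Prod.mk x ⁻¹' ((fun p : ℝ × ℝ => p.1 + p.2) ⁻¹' s)) = (fun y => x + y) ⁻¹' s := rfl
    rw [hpre, ← Measure.map_apply (measurable_const_add x) hs, gaussianReal_map_const_add,
      gaussianReal_apply _ (by simp [h₂]) s]
  simp_rw [hslice]
  rw [gaussianReal_of_var_ne_zero _ h₁,
    lintegral_withDensity_eq_lintegral_mul volume (measurable_gaussianPDF m₁ v₁)
      (by exact Measurable.lintegral_prod_right (hmeas2.comp (measurable_fst.prodMk measurable_snd)))]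
  simp only [Pi.mul_apply]
  rw [lintegral_congr (fun x : ℝ =>
    (lintegral_const_mul (gaussianPDF m₁ v₁ x) (measurable_gaussianPDF (m₂ + x) v₂)).symm)]
  rw [lintegral_lintegral_swap (by
    exact ((measurable_gaussianPDF m₁ v₁).comp measurable_fst |>.mul
      (hmeas2.comp (measurable_fst.prodMk measurable_snd))).aemeasurable)]
  rw [gaussianReal_apply _ (by simp [h₁]) s]
  exact setLIntegral_congr_fun hs (fun z _ =>
    gaussianPDF_lintegral_conv h₁ h₂ m₁ m₂ z)

lemma map_pi_map {d : ℕ} (P : Fin d → Measure (ℝ × ℝ)) [∀ i, IsProbabilityMeasure (P i)]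
    (h : Fin d → ℝ × ℝ → ℝ) (hm : ∀ i, Measurable (h i)) :
    Measure.map (fun (f : Fin d → ℝ × ℝ) (i : Fin d) => h i (f i)) (Measure.pi P)
      = Measure.pi (fun i => (P i).map (h i)) := by
  haveI : ∀ i, IsProbabilityMeasure ((P i).map (h i)) :=
    fun i => Measure.isProbabilityMeasure_map (hm i).aemeasurable
  refine (Measure.pi_eq fun s hs => ?_).symm
  have hmeas : Measurable (fun (f : Fin d → ℝ × ℝ) (i : Fin d) => h i (f i)) :=
    measurable_pi_lambda _ fun i => (hm i).comp (measurable_pi_apply i)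
  rw [Measure.map_apply hmeas (MeasurableSet.univ_pi hs)]
  have hpre : (fun (f : Fin d → ℝ × ℝ) (i : Fin d) => h i (f i)) ⁻¹' Set.pi Set.univ s
      = Set.pi Set.univ (fun i => h i ⁻¹' s i) := by
    ext f; simp [Set.mem_pi]
  rw [hpre, Measure.pi_pi]
  exact Finset.prod_congr rfl fun i _ => (Measure.map_apply (hm i) (hs i)).symm

lemma affine_pair_law (α β κ m : ℝ) (w : ℝ≥0) :
    Measure.map (fun q : ℝ × ℝ => α * q.1 + (β * q.2 + κ))
        ((gaussianReal m w).prod (gaussianReal 0 1))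
      = gaussianReal (α * m + κ) (⟨α ^ 2, sq_nonneg _⟩ * w + ⟨β ^ 2, sq_nonneg _⟩) := by
  have hcomp : (fun q : ℝ × ℝ => α * q.1 + (β * q.2 + κ))
      = (fun p : ℝ × ℝ => p.1 + p.2) ∘ (Prod.map (fun y => α * y) (fun z => β * z + κ)) := rfl
  rw [hcomp, ← Measure.map_map measurable_add
    ((measurable_const_mul α).prodMap ((measurable_const_mul β).add_const κ)),
    ← Measure.map_prod_map _ _ (measurable_const_mul α) ((measurable_const_mul β).add_const κ)]
  have h1 : Measure.map (fun y => α * y) (gaussianReal m w)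
      = gaussianReal (α * m) (⟨α ^ 2, sq_nonneg _⟩ * w) := gaussianReal_map_const_mul α
  have h2 : Measure.map (fun z => β * z + κ) (gaussianReal 0 1)
      = gaussianReal κ ⟨β ^ 2, sq_nonneg _⟩ := by
    have : (fun z : ℝ => β * z + κ) = (fun y => y + κ) ∘ (fun z => β * z) := rfl
    rw [this, ← Measure.map_map (measurable_add_const κ) (measurable_const_mul β),
      gaussianReal_map_const_mul β, gaussianReal_map_add_const κ]
    norm_num
    rfl
  rw [h1, h2]; exact gaussianReal_conv _ _ _ _

/-- Theorem 1, conclusion 2, EPS law: the adversarial expected perturbation score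
`Ŝ = (1/T)·∫₀ᵀ (fun i => −(γ t·Y₀ i + σ t·Z i + ε i − γ t·μ i)/(v t)) dt` is Gaussian
with mean `−c•ε` and per-coordinate variance `a²σx² + b²`, where
`a = (1/T)∫₀ᵀ γ t/(v t) dt`, `b = (1/T)∫₀ᵀ σ t/(v t) dt`, `c = (1/T)∫₀ᵀ 1/(v t) dt`. -/
theorem eps_adversarial_law (d : ℕ) (hd : 1 ≤ d) (T : ℝ) (hT : 0 < T) (μ : Fin d → ℝ)
    (σx : ℝ) (hσx : 0 ≤ σx) (ε : Fin d → ℝ) (γ σ : ℝ → ℝ) (hγ : Measurable γ)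
    (hσ : Measurable σ) (v : ℝ → ℝ) (hv : ∀ t, v t = (γ t) ^ 2 * σx ^ 2 + (σ t) ^ 2)
    (hvpos : ∀ t ∈ Set.Icc (0 : ℝ) T, 0 < v t)
    (hint1 : IntervalIntegrable (fun t => γ t / v t) volume 0 T)
    (hint2 : IntervalIntegrable (fun t => σ t / v t) volume 0 T)
    (hint3 : IntervalIntegrable (fun t => 1 / v t) volume 0 T) :
    Measure.map
      (fun p : (Fin d → ℝ) × (Fin d → ℝ) =>
        (1 / T) • ∫ t in (0 : ℝ)..T,
          (fun i => -(γ t * p.1 i + σ t * p.2 i + ε i - γ t * μ i) / v t))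
      ((Measure.pi fun i => gaussianReal (μ i) ((σx ^ 2).toNNReal)).prod
        (Measure.pi fun _ => gaussianReal 0 1))
    = Measure.pi fun i => gaussianReal
        (-(((1 / T) * ∫ t in (0 : ℝ)..T, 1 / v t) * ε i))
        ((((1 / T) * ∫ t in (0 : ℝ)..T, γ t / v t) ^ 2 * σx ^ 2
          + ((1 / T) * ∫ t in (0 : ℝ)..T, σ t / v t) ^ 2).toNNReal) := by
  set a : ℝ := (1 / T) * ∫ t in (0 : ℝ)..T, γ t / v t with ha
  set b : ℝ := (1 / T) * ∫ t in (0 : ℝ)..T, σ t / v t with hb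
  set c : ℝ := (1 / T) * ∫ t in (0 : ℝ)..T, 1 / v t with hc
  set W : ℝ≥0 := (σx ^ 2).toNNReal with hW
  -- Step 1: rewrite the map as a coordinatewise affine function
  have hfun : (fun p : (Fin d → ℝ) × (Fin d → ℝ) =>
      (1 / T) • ∫ t in (0 : ℝ)..T,
        (fun i => -(γ t * p.1 i + σ t * p.2 i + ε i - γ t * μ i) / v t))
      = fun p (i : Fin d) =>
          (-a) * p.1 i + ((-b) * p.2 i + (a * μ i + (-c) * ε i)) := by
    funext p
    have hF : (fun t => (fun i => -(γ t * p.1 i + σ t * p.2 i + ε i - γ t * μ i) / v t))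
        = fun t => (γ t / v t) • (μ - p.1) + ((σ t / v t) • (-p.2) + (1 / v t) • (-ε)) := by
      funext t
      funext i
      simp only [Pi.add_apply, Pi.smul_apply, Pi.sub_apply, Pi.neg_apply, smul_eq_mul]
      ring
    rw [hF]
    have hi1 : IntervalIntegrable (fun t => (γ t / v t) • (μ - p.1)) volume 0 T :=
      ⟨hint1.1.smul_const _, hint1.2.smul_const _⟩
    have hi2 : IntervalIntegrable (fun t => (σ t / v t) • (-p.2)) volume 0 T :=
      ⟨hint2.1.smul_const _, hint2.2.smul_const _⟩
    have hi3 : IntervalIntegrable (fun t => (1 / v t) • (-ε)) volume 0 T :=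
      ⟨hint3.1.smul_const _, hint3.2.smul_const _⟩
    rw [intervalIntegral.integral_add hi1 (hi2.add hi3), intervalIntegral.integral_add hi2 hi3,
      intervalIntegral.integral_smul_const, intervalIntegral.integral_smul_const,
      intervalIntegral.integral_smul_const]
    funext i
    simp only [Pi.smul_apply, Pi.add_apply, Pi.sub_apply, Pi.neg_apply, smul_eq_mul, ha, hb, hc]
    ring
  rw [hfun]
  -- Step 2: factor through the product-of-pairs space
  set h : Fin d → ℝ × ℝ → ℝ :=
    fun i q => (-a) * q.1 + ((-b) * q.2 + (a * μ i + (-c) * ε i)) with hh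
  have hm : ∀ i, Measurable (h i) := by
    intro i
    exact ((measurable_fst.const_mul _).add
      ((measurable_snd.const_mul _).add_const _))
  have hcomp : (fun p : (Fin d → ℝ) × (Fin d → ℝ) => fun i : Fin d =>
      (-a) * p.1 i + ((-b) * p.2 i + (a * μ i + (-c) * ε i)))
      = (fun (f : Fin d → ℝ × ℝ) (i : Fin d) => h i (f i))
        ∘ ⇑(MeasurableEquiv.arrowProdEquivProdArrow ℝ ℝ (Fin d)).symm := by
    funext p
    rfl
  have hmeaspi : Measurable (fun (f : Fin d → ℝ × ℝ) (i : Fin d) => h i (f i)) :=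
    measurable_pi_lambda _ fun i => (hm i).comp (measurable_pi_apply i)
  rw [hcomp, ← Measure.map_map hmeaspi (MeasurableEquiv.measurable _)]
  have hmp := ((measurePreserving_arrowProdEquivProdArrow ℝ ℝ (Fin d)
      (fun i => gaussianReal (μ i) W) (fun _ => gaussianReal 0 1)).symm
      (MeasurableEquiv.arrowProdEquivProdArrow ℝ ℝ (Fin d)))
  rw [hmp.map_eq, map_pi_map _ h hm]
  refine congrArg Measure.pi (funext fun i => ?_)
  rw [hh, affine_pair_law (-a) (-b) (a * μ i + (-c) * ε i) (μ i) W]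
  congr 1
  · ring
  · apply NNReal.coe_injective
    have hnn : (0:ℝ) ≤ a ^ 2 * σx ^ 2 + b ^ 2 := by positivity
    push_cast [NNReal.coe_mk, hW, Real.coe_toNNReal _ (sq_nonneg σx), Real.coe_toNNReal _ hnn]
    show (-a) ^ 2 * ((σx ^ 2).toNNReal : ℝ) + (-b) ^ 2 = a ^ 2 * σx ^ 2 + b ^ 2
    rw [Real.coe_toNNReal _ (sq_nonneg σx)]
    ring
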